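/- Set f(z) := σ_R(2σ_R(z) − 4σ_R(z−1/2)) and let k ≥ 1. Let I be the partition of [0,1] into the maximal intervals on which 1[f^k(x) ≥ 1/2] is constant. Then |I| = 2^k + 1, and for each U ∈ I, ∫_U |f^k(x) − 1/2| dx ≥ 2^{−k−3}. -/

import Mathlib

open MeasureTheory
open scoped ENNReal

noncomputable section

/-- The classifier associated to `f`: `x ↦ 1[f x ≥ 1/2]`. -/
def clf (f : ℝ → ℝ) (x : ℝ) : Prop := 1/2 ≤ f x

/-- `I` is a partition of `ℝ` into (nonempty) intervals. -/
def IsIntervalPartition (I : Finset (Set ℝ)) : Prop :=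
  (∀ U ∈ I, U.OrdConnected ∧ U.Nonempty) ∧
  ((I : Set (Set ℝ)).PairwiseDisjoint id) ∧
  ⋃₀ (I : Set (Set ℝ)) = Set.univ

/-- `I` is a partition of `ℝ` into intervals on each of which the classifier of `f`
is constant; the crossing number `Cr f` is the minimal cardinality of such a partition. -/
def IsCrossingPartition (f : ℝ → ℝ) (I : Finset (Set ℝ)) : Prop :=
  IsIntervalPartition I ∧ ∀ U ∈ I, ∀ x ∈ U, ∀ y ∈ U, (clf f x ↔ clf f y)

/-- The ReLU. -/
def relu (z : ℝ) : ℝ := max 0 z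

/-- The ReLU triangle map `f(z) = σ_R(2σ_R(z) − 4σ_R(z − 1/2))`. -/
def triangleF (z : ℝ) : ℝ := relu (2 * relu z - 4 * relu (z - 1/2))

/-- `I` is a partition of `[0,1]` into intervals on each of which the classifier of
`f` is constant; maximality of the intervals is captured by minimal cardinality. -/
def IsCrossingPartitionOn (f : ℝ → ℝ) (I : Finset (Set ℝ)) : Prop :=
  (∀ U ∈ I, U.OrdConnected ∧ U.Nonempty) ∧
  ((I : Set (Set ℝ)).PairwiseDisjoint id) ∧
  ⋃₀ (I : Set (Set ℝ)) = Set.Icc (0:ℝ) 1 ∧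
  ∀ U ∈ I, ∀ x ∈ U, ∀ y ∈ U, (clf f x ↔ clf f y)

lemma tri_left {x : ℝ} (h0 : 0 ≤ x) (h1 : x ≤ 1/2) : triangleF x = 2 * x := by
  unfold triangleF relu
  rw [max_eq_right h0, max_eq_left (show x - 1/2 ≤ (0:ℝ) by linarith),
    max_eq_right (show (0:ℝ) ≤ 2*x - 4*0 by linarith)]
  ring

lemma tri_right {x : ℝ} (h0 : 1/2 ≤ x) (h1 : x ≤ 1) : triangleF x = 2 - 2 * x := by
  unfold triangleF relu
  rw [max_eq_right (show (0:ℝ) ≤ x by linarith),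
    max_eq_right (show (0:ℝ) ≤ x - 1/2 by linarith),
    max_eq_right (show (0:ℝ) ≤ 2*x - 4*(x-1/2) by linarith)]
  ring

lemma iterA : ∀ (k j : ℕ), j < 2^k → ∀ x : ℝ, (j:ℝ)/2^k ≤ x → x ≤ ((j:ℝ)+1)/2^k →
    triangleF^[k] x = if Even j then 2^k * x - j else ((j:ℝ)+1) - 2^k * x := by
  intro k
  induction k with
  | zero =>
    intro j hj x hx1 hx2
    interval_cases j
    simp only [Function.iterate_zero, id_eq, pow_zero, Nat.cast_zero, Even.zero, if_true]
    ring
  | succ k ih =>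
    intro j hj x hx1 hx2
    have hP : (0:ℝ) < 2^k := by positivity
    have hP2 : (0:ℝ) < 2^(k+1) := by positivity
    have hps : (2:ℝ)^(k+1) = 2 * 2^k := by ring
    have hx1' : (j:ℝ) ≤ 2^(k+1) * x := by
      rw [div_le_iff₀ hP2] at hx1; linarith
    have hx2' : 2^(k+1) * x ≤ (j:ℝ)+1 := by
      rw [le_div_iff₀ hP2] at hx2; linarith
    rw [Function.iterate_succ_apply]
    rcases lt_or_ge j (2^k) with hjk | hjk
    · -- left half
      have hj2 : ((j:ℝ)+1) ≤ 2^k := by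
        have : (j:ℕ)+1 ≤ 2^k := hjk
        exact_mod_cast this
      have hx0 : 0 ≤ x := le_trans (by positivity) hx1
      have hxh : x ≤ 1/2 := by nlinarith
      rw [tri_left hx0 hxh]
      have := ih j hjk (2*x) (by rw [div_le_iff₀ hP]; nlinarith) (by rw [le_div_iff₀ hP]; nlinarith)
      rw [this]
      split_ifs <;> [skip; skip] <;> · rw [hps]; ring_nf
    · -- right half
      have hjk' : (2:ℝ)^k ≤ j := by exact_mod_cast (Nat.cast_le.mpr hjk : ((2^k:ℕ):ℝ) ≤ j)
      have hxh : 1/2 ≤ x := by nlinarith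
      have hx1'' : x ≤ 1 := by
        have hj1 : ((j:ℝ)+1) ≤ 2^(k+1) := by exact_mod_cast (hj : j+1 ≤ 2^(k+1))
        nlinarith
      rw [tri_right hxh hx1'']
      set j' : ℕ := 2^(k+1) - 1 - j with hj'def
      have hjlt : j < 2^(k+1) := hj
      have hple : 2^k ≤ j := hjk
      have hpow : (2:ℕ)^(k+1) = 2 * 2^k := by rw [pow_succ]; ring
      have hj'lt : j' < 2^k := by omega
      have hc : (j' : ℝ) = 2^(k+1) - 1 - j := by
        have h1 : j' + j + 1 = 2^(k+1) := by omega
        have h2 := congrArg (Nat.cast : ℕ → ℝ) h1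
        push_cast at h2
        linarith
      have hb1 : (j':ℝ)/2^k ≤ 2 - 2*x := by
        rw [div_le_iff₀ hP]; rw [hc]; nlinarith
      have hb2 : 2 - 2*x ≤ ((j':ℝ)+1)/2^k := by
        rw [le_div_iff₀ hP]; rw [hc]; nlinarith
      have := ih j' hj'lt (2 - 2*x) hb1 hb2
      rw [this]
      have hpar : Even j' ↔ ¬ Even j := by
        rw [Nat.even_iff, Nat.even_iff]; omega
      rcases Nat.even_or_odd j with hj'' | hj''
      · have hne : ¬ Even j' := fun h => (hpar.mp h) hj''
        rw [if_neg hne, if_pos hj'', hc]; ring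
      · have hne : ¬ Even j := Nat.not_even_iff_odd.mpr hj''
        rw [if_pos (hpar.mpr hne), if_neg hne, hc]; ring

lemma iterAbs (k j : ℕ) (hk : 1 ≤ k) (hj : j ≤ 2^k) {x : ℝ} (hx0 : 0 ≤ x) (hx1 : x ≤ 1)
    (hd : |2^k * x - (j:ℝ)| ≤ 1/2) :
    triangleF^[k] x = if Even j then |2^k * x - (j:ℝ)| else 1 - |2^k * x - (j:ℝ)| := by
  have hP : (0:ℝ) < 2^k := by positivity
  rcases le_or_gt (j:ℝ) (2^k * x) with hge | hlt
  · have habs : |2^k * x - (j:ℝ)| = 2^k * x - j := abs_of_nonneg (by linarith)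
    rcases lt_or_eq_of_le hj with hjlt | hjeq
    · have hb1 : (j:ℝ)/2^k ≤ x := by rw [div_le_iff₀ hP]; linarith
      have hb2 : x ≤ ((j:ℝ)+1)/2^k := by
        rw [le_div_iff₀ hP]
        rw [abs_le] at hd; linarith
      rw [iterA k j hjlt x hb1 hb2, habs]
      split_ifs <;> ring
    · -- j = 2^k, so x = 1
      subst hjeq
      have hj2 : ((2^k:ℕ):ℝ) = (2:ℝ)^k := by push_cast; ring
      have hx : x = 1 := by
        have : (2:ℝ)^k ≤ 2^k * x := by rw [← hj2] at hge ⊢; exact hge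
        nlinarith
      subst hx
      have hlt' : 2^k - 1 < 2^k := Nat.sub_lt (Nat.pow_pos (n := k) (by norm_num)) one_pos
      have hcast : ((2^k - 1 : ℕ):ℝ) = (2:ℝ)^k - 1 := by
        have : (1:ℕ) ≤ 2^k := Nat.one_le_two_pow
        push_cast [this]; ring
      have hb1 : ((2^k - 1 : ℕ):ℝ)/2^k ≤ 1 := by rw [div_le_one hP, hcast]; linarith
      have hb2 : (1:ℝ) ≤ (((2^k - 1:ℕ):ℝ)+1)/2^k := by rw [le_div_iff₀ hP, hcast]; linarith
      have hodd : ¬ Even (2^k - 1) := by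
        have h2 : 2^k % 2 = 0 := by
          have : (2:ℕ) ∣ 2^k := dvd_pow_self 2 (by omega)
          omega
        rw [Nat.even_iff]; omega
      have heval := iterA k (2^k - 1) hlt' 1 hb1 hb2
      rw [if_neg hodd, hcast] at heval
      have heven : Even (2^k) := by
        rw [Nat.even_iff]
        have : (2:ℕ) ∣ 2^k := dvd_pow_self 2 (by omega)
        omega
      rw [heval, if_pos heven, hj2]
      rw [abs_of_nonneg (by linarith : (0:ℝ) ≤ 2^k * 1 - 2^k)]
      ring
  · -- 2^k x < j, use piece j - 1
    have hj1 : 1 ≤ j := by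
      by_contra h
      push_neg at h
      interval_cases j
      simp at hlt
      nlinarith
    have habs : |2^k * x - (j:ℝ)| = (j:ℝ) - 2^k * x := by
      rw [abs_of_nonpos (by linarith)]; ring
    have hcast : ((j - 1 : ℕ):ℝ) = (j:ℝ) - 1 := by push_cast [hj1]; ring
    have hlt' : j - 1 < 2^k := by omega
    have hb1 : ((j-1:ℕ):ℝ)/2^k ≤ x := by
      rw [div_le_iff₀ hP, hcast]
      rw [abs_le] at hd; linarith
    have hb2 : x ≤ (((j-1:ℕ):ℝ)+1)/2^k := by rw [le_div_iff₀ hP, hcast]; linarith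
    have hpar : Even (j-1) ↔ ¬ Even j := by rw [Nat.even_iff, Nat.even_iff]; omega
    have heval := iterA k (j-1) hlt' x hb1 hb2
    rw [hcast] at heval
    rcases Nat.even_or_odd j with hj'' | hj''
    · rw [if_neg (by rw [hpar]; simp [hj''])] at heval
      rw [heval, if_pos hj'', habs]
      ring
    · have hne : ¬ Even j := Nat.not_even_iff_odd.mpr hj''
      rw [if_pos (hpar.mpr hne)] at heval
      rw [heval, if_neg hne, habs]
      ring

lemma absdiff (k j : ℕ) (hk : 1 ≤ k) (hj : j ≤ 2^k) {x : ℝ} (hx0 : 0 ≤ x) (hx1 : x ≤ 1)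
    (hd : |2^k * x - (j:ℝ)| ≤ 1/2) :
    |triangleF^[k] x - 1/2| = 1/2 - |2^k * x - (j:ℝ)| := by
  rw [iterAbs k j hk hj hx0 hx1 hd]
  have h0 : 0 ≤ |2^k * x - (j:ℝ)| := abs_nonneg _
  split_ifs
  · rw [abs_of_nonpos (by linarith)]; ring
  · rw [abs_of_nonneg (by linarith)]; ring

lemma clf_odd (k j : ℕ) (hk : 1 ≤ k) (hj : j ≤ 2^k) (hodd : ¬ Even j) {x : ℝ} (hx0 : 0 ≤ x)
    (hx1 : x ≤ 1) (hd : |2^k * x - (j:ℝ)| ≤ 1/2) : clf (triangleF^[k]) x := by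
  unfold clf
  rw [iterAbs k j hk hj hx0 hx1 hd, if_neg hodd]
  linarith

lemma clf_even (k j : ℕ) (hk : 1 ≤ k) (hj : j ≤ 2^k) (heven : Even j) {x : ℝ} (hx0 : 0 ≤ x)
    (hx1 : x ≤ 1) (hd : |2^k * x - (j:ℝ)| < 1/2) : ¬ clf (triangleF^[k]) x := by
  unfold clf
  rw [iterAbs k j hk hj hx0 hx1 (le_of_lt hd), if_pos heven]
  linarith

lemma clf_pt (k j : ℕ) (hk : 1 ≤ k) (hj : j ≤ 2^k) :
    clf (triangleF^[k]) ((j:ℝ)/2^k) ↔ Odd j := by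
  have hP : (0:ℝ) < 2^k := by positivity
  have hx0 : (0:ℝ) ≤ (j:ℝ)/2^k := by positivity
  have hx1 : (j:ℝ)/2^k ≤ 1 := by
    rw [div_le_one hP]
    have := (Nat.cast_le (α := ℝ)).mpr hj
    push_cast at this
    linarith
  have hz : 2^k * ((j:ℝ)/2^k) - (j:ℝ) = 0 := by field_simp; ring
  rcases Nat.even_or_odd j with he | ho
  · constructor
    · intro h
      exact absurd h (clf_even k j hk hj he hx0 hx1 (by rw [hz]; norm_num))
    · intro h; exact absurd h (by simp [Nat.not_odd_iff_even.mpr he])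
  · constructor
    · intro _; exact ho
    · intro _
      exact clf_odd k j hk hj (Nat.not_even_iff_odd.mpr ho) hx0 hx1 (by rw [hz]; norm_num)

def pieceS (k j : ℕ) : Set ℝ :=
  if Even j then
    Set.Ioo ((j:ℝ)/2^k - 1/(2*2^k)) ((j:ℝ)/2^k + 1/(2*2^k)) ∩ Set.Icc 0 1
  else Set.Icc ((j:ℝ)/2^k - 1/(2*2^k)) ((j:ℝ)/2^k + 1/(2*2^k))

lemma abs_scale (k : ℕ) (j : ℕ) (x : ℝ) :
    |2^k * x - (j:ℝ)| = 2^k * |x - (j:ℝ)/2^k| := by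
  have hP : (0:ℝ) < 2^k := by positivity
  have h : 2^k * x - (j:ℝ) = 2^k * (x - (j:ℝ)/2^k) := by field_simp
  rw [h, abs_mul, abs_of_pos hP]


lemma cast_le_pow {k j : ℕ} (hj : j ≤ 2^k) : (j:ℝ) ≤ 2^k := by
  have := (Nat.cast_le (α := ℝ)).mpr hj; push_cast at this; linarith

lemma pieceS_subset (k j : ℕ) (hk : 1 ≤ k) (hj : j ≤ 2^k) :
    pieceS k j ⊆ Set.Icc (0:ℝ) 1 := by
  unfold pieceS
  split_ifs with he
  · exact Set.inter_subset_right
  · -- odd piece: 1 ≤ j ≤ 2^k - 1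
    have hP : (0:ℝ) < 2^k := by positivity
    have hj1 : 1 ≤ j := by
      rcases Nat.eq_zero_or_pos j with h | h
      · exact absurd (h ▸ Even.zero) he
      · exact h
    have hj2 : j < 2^k := by
      rcases lt_or_eq_of_le hj with h | h
      · exact h
      · exfalso; apply he; rw [h, Nat.even_iff]
        have : (2:ℕ) ∣ 2^k := dvd_pow_self 2 (by omega)
        omega
    have hcj1 : (1:ℝ) ≤ (j:ℝ) := by exact_mod_cast hj1
    have hcj2 : (j:ℝ) + 1 ≤ 2^k := by
      have := (Nat.cast_le (α := ℝ)).mpr hj2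
      push_cast at this
      linarith
    intro x hx
    rw [Set.mem_Icc] at hx ⊢
    constructor
    · have : (0:ℝ) ≤ (j:ℝ)/2^k - 1/(2*2^k) := by
        rw [sub_nonneg, div_le_div_iff₀ (by positivity) hP]
        nlinarith
      linarith [hx.1]
    · have : (j:ℝ)/2^k + 1/(2*2^k) ≤ 1 := by
        rw [← sub_nonneg]
        have h2 : 1 - ((j:ℝ)/2^k + 1/(2*2^k)) = (2*(2^k - j) - 1)/(2*2^k) := by
          field_simp; ring
        rw [h2]
        apply div_nonneg _ (by positivity)
        nlinarith
      linarith [hx.2]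

lemma mem_pieceS_close {k j : ℕ} {x : ℝ} (hx : x ∈ pieceS k j) :
    |x - (j:ℝ)/2^k| ≤ 1/(2*2^k) := by
  unfold pieceS at hx
  split_ifs at hx with he
  · obtain ⟨⟨h1, h2⟩, _⟩ := hx
    rw [abs_le]; constructor <;> linarith
  · obtain ⟨h1, h2⟩ := hx
    rw [abs_le]; constructor <;> linarith

lemma mem_pieceS_close_even {k j : ℕ} (he : Even j) {x : ℝ} (hx : x ∈ pieceS k j) :
    |x - (j:ℝ)/2^k| < 1/(2*2^k) := by
  unfold pieceS at hx
  rw [if_pos he] at hx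
  obtain ⟨⟨h1, h2⟩, _⟩ := hx
  rw [abs_lt]; constructor <;> linarith

lemma scaled_bound {k j : ℕ} {x : ℝ} (h : |x - (j:ℝ)/2^k| ≤ 1/(2*2^k)) :
    |2^k * x - (j:ℝ)| ≤ 1/2 := by
  have hP : (0:ℝ) < 2^k := by positivity
  rw [abs_scale]
  calc 2^k * |x - (j:ℝ)/2^k| ≤ 2^k * (1/(2*2^k)) := by nlinarith [abs_nonneg (x - (j:ℝ)/2^k)]
    _ = 1/2 := by field_simp

lemma scaled_bound_lt {k j : ℕ} {x : ℝ} (h : |x - (j:ℝ)/2^k| < 1/(2*2^k)) :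
    |2^k * x - (j:ℝ)| < 1/2 := by
  have hP : (0:ℝ) < 2^k := by positivity
  rw [abs_scale]
  calc 2^k * |x - (j:ℝ)/2^k| < 2^k * (1/(2*2^k)) := by nlinarith
    _ = 1/2 := by field_simp

lemma clf_pieceS (k j : ℕ) (hk : 1 ≤ k) (hj : j ≤ 2^k) {x : ℝ} (hx : x ∈ pieceS k j) :
    clf (triangleF^[k]) x ↔ Odd j := by
  have hsub := pieceS_subset k j hk hj hx
  rw [Set.mem_Icc] at hsub
  rcases Nat.even_or_odd j with he | ho
  · have h1 := clf_even k j hk hj he hsub.1 hsub.2 (scaled_bound_lt (mem_pieceS_close_even he hx))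
    constructor
    · intro h; exact absurd h h1
    · intro h; exact absurd h (Nat.not_odd_iff_even.mpr he)
  · constructor
    · intro _; exact ho
    · intro _
      exact clf_odd k j hk hj (Nat.not_even_iff_odd.mpr ho) hsub.1 hsub.2
        (scaled_bound (mem_pieceS_close hx))

lemma pieceS_center_mem (k j : ℕ) (hk : 1 ≤ k) (hj : j ≤ 2^k) :
    (j:ℝ)/2^k ∈ pieceS k j := by
  have hP : (0:ℝ) < 2^k := by positivity
  have hH : (0:ℝ) < 1/(2*2^k) := by positivity
  have hx0 : (0:ℝ) ≤ (j:ℝ)/2^k := by positivity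
  have hx1 : (j:ℝ)/2^k ≤ 1 := by
    rw [div_le_one hP]; exact cast_le_pow hj
  unfold pieceS
  split_ifs
  · exact ⟨⟨by linarith, by linarith⟩, hx0, hx1⟩
  · exact ⟨by linarith, by linarith⟩

lemma pieceS_ordConnected (k j : ℕ) : (pieceS k j).OrdConnected := by
  unfold pieceS
  split_ifs
  · exact Set.OrdConnected.inter Set.ordConnected_Ioo Set.ordConnected_Icc
  · exact Set.ordConnected_Icc

lemma pieceS_disjoint (k : ℕ) {i j : ℕ} (hij : i ≠ j) {x : ℝ}
    (hxi : x ∈ pieceS k i) (hxj : x ∈ pieceS k j) : False := by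
  have hP : (0:ℝ) < 2^k := by positivity
  -- wlog i < j
  wlog hlt : i < j generalizing i j
  · exact this hij.symm hxj hxi (by omega)
  have hiub : x ≤ (i:ℝ)/2^k + 1/(2*2^k) := by
    have := mem_pieceS_close hxi
    rw [abs_le] at this; linarith [this.2]
  have hjlb : (j:ℝ)/2^k - 1/(2*2^k) ≤ x := by
    have := mem_pieceS_close hxj
    rw [abs_le] at this; linarith [this.1]
  have hcast : (i:ℝ) + 1 ≤ (j:ℝ) := by exact_mod_cast hlt
  rcases eq_or_lt_of_le (Nat.succ_le_of_lt hlt) with heq | hlt2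
  · -- j = i + 1: adjacent, parity differs
    have hjeq : (j:ℝ) = (i:ℝ) + 1 := by exact_mod_cast heq.symm
    have hmid : (i:ℝ)/2^k + 1/(2*2^k) = (j:ℝ)/2^k - 1/(2*2^k) := by
      rw [hjeq]; field_simp; ring
    rcases Nat.even_or_odd i with he | ho
    · have := mem_pieceS_close_even he hxi
      rw [abs_lt] at this
      linarith [this.2]
    · have he' : Even j := by
        rw [← heq]; exact Odd.add_one ho
      have := mem_pieceS_close_even he' hxj
      rw [abs_lt] at this
      linarith [this.1]
  · -- j ≥ i + 2
    have hcast2 : (i:ℝ) + 2 ≤ (j:ℝ) := by exact_mod_cast hlt2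
    have : (i:ℝ)/2^k + 1/(2*2^k) < (j:ℝ)/2^k - 1/(2*2^k) := by
      rw [← sub_pos]
      have hexp : (j:ℝ)/2^k - 1/(2*2^k) - ((i:ℝ)/2^k + 1/(2*2^k)) = ((j:ℝ) - i - 1)/2^k := by
        field_simp; ring
      rw [hexp]
      apply div_pos _ hP
      linarith
    linarith

lemma scaled_rev {k j : ℕ} {x : ℝ} (h : |2^k * x - (j:ℝ)| < 1/2) :
    |x - (j:ℝ)/2^k| < 1/(2*2^k) := by
  have hP : (0:ℝ) < 2^k := by positivity
  rw [abs_scale] at h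
  rw [show (1:ℝ)/(2*2^k) = (1/2)/2^k by rw [div_div], lt_div_iff₀ hP]
  linarith

lemma pieceS_cover (k : ℕ) (hk : 1 ≤ k) {x : ℝ} (hx0 : 0 ≤ x) (hx1 : x ≤ 1) :
    ∃ j ≤ 2^k, x ∈ pieceS k j := by
  have hP : (0:ℝ) < 2^k := by positivity
  set y : ℝ := 2^k * x with hy
  set n : ℤ := round y with hn
  have hb1 : (n:ℝ) ≤ y + 1/2 := by
    rw [hn, round_eq]
    push_cast
    linarith [Int.floor_le (y + 1/2)]
  have hb2 : y - 1/2 < (n:ℝ) := by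
    rw [hn, round_eq]
    push_cast
    linarith [Int.lt_floor_add_one (y + 1/2)]
  have hy0 : 0 ≤ y := by positivity
  have hy1 : y ≤ 2^k := by nlinarith
  have hn0 : 0 ≤ n := by
    have h : ((-1:ℤ):ℝ) < (n:ℝ) := by push_cast; linarith
    have : (-1:ℤ) < n := by exact_mod_cast h
    omega
  have hnle : n ≤ ((2^k:ℕ):ℤ) := by
    have h : (n:ℝ) < (((2^k:ℕ):ℤ):ℝ) + 1 := by push_cast; linarith
    have : n < ((2^k:ℕ):ℤ) + 1 := by exact_mod_cast h
    omega
  set j : ℕ := n.toNat with hjdef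
  have hjcast : (j:ℝ) = (n:ℝ) := by
    rw [hjdef]
    exact_mod_cast congrArg (Int.cast : ℤ → ℝ) (Int.toNat_of_nonneg hn0)
  have hjle : j ≤ 2^k := by
    rw [hjdef]
    exact Int.toNat_le.mpr hnle
  rcases lt_or_eq_of_le (abs_sub_round y) with hlt | heq
  · simp only [← hn] at hlt
    have hd : |2^k * x - (j:ℝ)| < 1/2 := by rw [hjcast, ← hy]; exact hlt
    have hcl := scaled_rev hd
    rw [abs_lt] at hcl
    refine ⟨j, hjle, ?_⟩
    unfold pieceS
    split_ifs
    · exact ⟨⟨by linarith, by linarith⟩, hx0, hx1⟩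
    · exact ⟨by linarith, by linarith⟩
  · simp only [← hn] at heq
    have heq' : y - (n:ℝ) = -(1/2) := by
      rcases (abs_eq (by norm_num : (0:ℝ) ≤ 1/2)).mp heq with h | h
      · linarith
      · exact h
    have hj1 : 1 ≤ j := by
      have h1 : (0:ℝ) < (n:ℝ) := by linarith
      have h2 : (0:ℤ) < n := by exact_mod_cast h1
      omega
    have hxeq : x = (j:ℝ)/2^k - 1/(2*2^k) := by
      rw [hjcast]
      have h2 : 2^k * x = (n:ℝ) - 1/2 := by rw [← hy]; linarith
      have h3 : (n:ℝ)/2^k - 1/(2*2^k) = ((n:ℝ) - 1/2)/2^k := by field_simp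
      rw [h3, eq_div_iff (ne_of_gt hP)]
      linear_combination h2
    rcases Nat.even_or_odd j with he | ho
    · refine ⟨j - 1, by omega, ?_⟩
      have hcast : ((j - 1:ℕ):ℝ) = (j:ℝ) - 1 := by push_cast [hj1]; ring
      have hodd : ¬ Even (j - 1) := by
        rw [Nat.even_iff] at he ⊢; omega
      unfold pieceS
      rw [if_neg hodd]
      have h0 : ((j:ℝ)-1)/2^k + 1/(2*2^k) = (j:ℝ)/2^k - 1/(2*2^k) := by field_simp; ring
      have hmono : ((j:ℝ)-1)/2^k ≤ (j:ℝ)/2^k := by gcongr <;> linarith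
      constructor
      · rw [hcast, hxeq]; linarith
      · rw [hcast, hxeq]; linarith
    · refine ⟨j, hjle, ?_⟩
      unfold pieceS
      rw [if_neg (Nat.not_even_iff_odd.mpr ho)]
      have hHpos : (0:ℝ) < 1/(2*2^k) := by positivity
      exact ⟨le_of_eq hxeq.symm, by rw [hxeq]; linarith⟩

noncomputable instance setRealDecEq : DecidableEq (Set ℝ) := Classical.decEq _

def Jpart (k : ℕ) : Finset (Set ℝ) :=
  (Finset.range (2^k+1)).image (pieceS k)

lemma Jpart_card (k : ℕ) (hk : 1 ≤ k) : (Jpart k).card = 2^k + 1 := by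
  rw [Jpart, Finset.card_image_of_injOn, Finset.card_range]
  intro i hi j hj hij
  by_contra hne
  rw [Finset.mem_coe, Finset.mem_range] at hi hj
  exact pieceS_disjoint k hne (pieceS_center_mem k i hk (Nat.lt_succ_iff.mp hi))
    (hij ▸ pieceS_center_mem k i hk (Nat.lt_succ_iff.mp hi))

lemma Jpart_crossing (k : ℕ) (hk : 1 ≤ k) :
    IsCrossingPartitionOn (triangleF^[k]) (Jpart k) := by
  have hmem : ∀ U ∈ Jpart k, ∃ j ≤ 2^k, U = pieceS k j := by
    intro U hU
    rw [Jpart, Finset.mem_image] at hU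
    obtain ⟨j, hj, rfl⟩ := hU
    exact ⟨j, Nat.lt_succ_iff.mp (Finset.mem_range.mp hj), rfl⟩
  refine ⟨?_, ?_, ?_, ?_⟩
  · intro U hU
    obtain ⟨j, hj, rfl⟩ := hmem U hU
    exact ⟨pieceS_ordConnected k j, ⟨_, pieceS_center_mem k j hk hj⟩⟩
  · intro U hU V hV hne
    rw [Finset.mem_coe] at hU hV
    obtain ⟨i, hi, rfl⟩ := hmem U hU
    obtain ⟨j, hj, rfl⟩ := hmem V hV
    have hij : i ≠ j := fun h => hne (by rw [h])
    exact Set.disjoint_left.mpr fun x hx hx' => pieceS_disjoint k hij hx hx'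
  · ext x
    simp only [Set.mem_sUnion, Finset.mem_coe]
    constructor
    · rintro ⟨U, hU, hxU⟩
      obtain ⟨j, hj, rfl⟩ := hmem U hU
      exact pieceS_subset k j hk hj hxU
    · intro hx
      rw [Set.mem_Icc] at hx
      obtain ⟨j, hj, hxj⟩ := pieceS_cover k hk hx.1 hx.2
      exact ⟨pieceS k j, Finset.mem_image_of_mem _ (Finset.mem_range.mpr (Nat.lt_succ_iff.mpr hj)), hxj⟩
  · intro U hU x hx y hy
    obtain ⟨j, hj, rfl⟩ := hmem U hU
    rw [clf_pieceS k j hk hj hx, clf_pieceS k j hk hj hy]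

open MeasureTheory in
lemma integral_linear (a b c m : ℝ) (hab : a ≤ b) :
    ∫ x in Set.Ioo a b, (c - m * x) = c * (b - a) - m * (b^2 - a^2) / 2 := by
  rw [← MeasureTheory.integral_Ioc_eq_integral_Ioo, ← intervalIntegral.integral_of_le hab]
  rw [intervalIntegral.integral_sub intervalIntegrable_const
    (IntervalIntegrable.const_mul intervalIntegral.intervalIntegrable_id m)]
  rw [intervalIntegral.integral_const, intervalIntegral.integral_const_mul, integral_id,
    smul_eq_mul]
  ring

open MeasureTheory in
lemma integral_half_lo (k j : ℕ) (hk : 1 ≤ k) (hj : j < 2^k) :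
    ∫ x in Set.Ioo ((j:ℝ)/2^k) ((j:ℝ)/2^k + 1/(2*2^k)), |triangleF^[k] x - 1/2|
      = 1/(8*2^k) := by
  have hP : (0:ℝ) < 2^k := by positivity
  have hH : (0:ℝ) < 1/(2*2^k) := by positivity
  set a : ℝ := (j:ℝ)/2^k with ha
  set b : ℝ := a + 1/(2*2^k) with hb
  have hj' : (j:ℝ) + 1 ≤ 2^k := by
    have := (Nat.cast_le (α := ℝ)).mpr hj
    push_cast at this; linarith
  have ha0 : 0 ≤ a := by positivity
  have hb1 : b ≤ 1 := by
    rw [hb, ha, ← sub_nonneg]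
    have : 1 - ((j:ℝ)/2^k + 1/(2*2^k)) = (2*(2^k - j) - 1)/(2*2^k) := by field_simp; ring
    rw [this]
    apply div_nonneg _ (by positivity)
    nlinarith
  have heq : Set.EqOn (fun x => |triangleF^[k] x - 1/2|) (fun x => ((1:ℝ)/2 + j) - 2^k * x)
      (Set.Ioo a b) := by
    intro x hx
    obtain ⟨hx1, hx2⟩ := hx
    have hax : (j:ℝ) < 2^k * x := by
      rw [ha, div_lt_iff₀ hP] at hx1; linarith
    have hbx : 2^k * x < (j:ℝ) + 1/2 := by
      have : x < a + 1/(2*2^k) := hx2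
      rw [ha] at this
      have h2 : 2^k * x < 2^k * ((j:ℝ)/2^k + 1/(2*2^k)) := by nlinarith
      have h3 : 2^k * ((j:ℝ)/2^k + 1/(2*2^k)) = (j:ℝ) + 1/2 := by field_simp
      linarith [h3 ▸ h2]
    have hd : |2^k * x - (j:ℝ)| ≤ 1/2 := by rw [abs_le]; constructor <;> linarith
    have hx0 : 0 ≤ x := le_trans ha0 (le_of_lt hx1)
    have hx1' : x ≤ 1 := le_trans (le_of_lt hx2) hb1
    simp only
    rw [absdiff k j hk (le_of_lt hj) hx0 hx1' hd, abs_of_nonneg (by linarith)]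
    ring
  rw [MeasureTheory.setIntegral_congr_fun measurableSet_Ioo heq]
  rw [integral_linear a b _ _ (by rw [hb]; linarith)]
  rw [hb, ha]
  field_simp
  ring

open MeasureTheory in
lemma integral_half_hi (k : ℕ) (hk : 1 ≤ k) :
    ∫ x in Set.Ioo (1 - 1/(2*2^k)) 1, |triangleF^[k] x - 1/2| = 1/(8*2^k) := by
  have hP : (0:ℝ) < 2^k := by positivity
  have hH : (0:ℝ) < 1/(2*2^k) := by positivity
  have hH1 : 1/(2*2^k) ≤ (1:ℝ) := by
    rw [div_le_one (by positivity)]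
    linarith [one_le_pow₀ (by norm_num : (1:ℝ) ≤ 2) (n := k)]
  have hcast : ((2^k:ℕ):ℝ) = (2:ℝ)^k := by push_cast; ring
  have heq : Set.EqOn (fun x => |triangleF^[k] x - 1/2|)
      (fun x => ((1:ℝ)/2 - 2^k) - (-(2^k)) * x) (Set.Ioo (1 - 1/(2*2^k)) 1) := by
    intro x hx
    obtain ⟨hx1, hx2⟩ := hx
    have hax : (2:ℝ)^k - 1/2 < 2^k * x := by
      have h2 : 2^k * (1 - 1/(2*2^k)) < 2^k * x := by nlinarith
      have h3 : 2^k * (1 - 1/(2*2^k)) = (2:ℝ)^k - 1/2 := by field_simp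
      linarith [h3 ▸ h2]
    have hbx : 2^k * x < (2:ℝ)^k := by nlinarith
    have hd : |2^k * x - ((2^k:ℕ):ℝ)| ≤ 1/2 := by
      rw [hcast, abs_le]; constructor <;> linarith
    have hx0 : 0 ≤ x := by linarith
    simp only
    rw [absdiff k (2^k) hk le_rfl hx0 (le_of_lt hx2) hd, hcast,
      abs_of_nonpos (by linarith)]
    ring
  rw [MeasureTheory.setIntegral_congr_fun measurableSet_Ioo heq]
  rw [integral_linear _ _ _ _ (by linarith)]
  field_simp
  ring

lemma zpow_fact3 (k : ℕ) : (2:ℝ)^(-(k:ℤ)-3) = 1/(8*2^k) := by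
  have h1 : (-(k:ℤ)-3) = -((k+3:ℕ):ℤ) := by push_cast; ring
  rw [h1, zpow_neg, zpow_natCast, pow_add]
  norm_num
  rw [mul_comm]

lemma cont_tri : Continuous triangleF := by
  have h1 : Continuous relu := continuous_const.max continuous_id
  exact h1.comp (((continuous_const.mul h1).sub
    (continuous_const.mul (h1.comp (continuous_id.sub continuous_const)))))

/-- The pieces of `f^k` on `[0,1]`: there are `2^k + 1` of them, and on each the
triangle wave contributes at least `2^(−k−3)` of `L¹` mass about `1/2`. -/
theorem triangle_iterate_pieces (k : ℕ) (hk : 1 ≤ k) (I : Finset (Set ℝ))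
    (hI : IsCrossingPartitionOn triangleF^[k] I)
    (hmin : ∀ J : Finset (Set ℝ), IsCrossingPartitionOn triangleF^[k] J → I.card ≤ J.card) :
    I.card = 2 ^ k + 1 ∧
    ∀ U ∈ I, (∫ x in U, |triangleF^[k] x - 1/2|) ≥ (2:ℝ) ^ (-(k:ℤ) - 3) := by
  obtain ⟨hOrd, hDisj, hUnion, hConst⟩ := hI
  have hP : (0:ℝ) < 2^k := by positivity
  have hH : (0:ℝ) < 1/(2*2^k) := by positivity
  have hHlt : 1/(2*2^k) < 1/(2:ℝ)^k := by
    rw [div_lt_div_iff₀ (by positivity) hP]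
    nlinarith
  have hub : I.card ≤ 2^k + 1 := by
    have := hmin (Jpart k) (Jpart_crossing k hk)
    rwa [Jpart_card k hk] at this
  -- choose a piece containing each lattice point
  have hex : ∀ j : ℕ, ∃ U, j ≤ 2^k → U ∈ I ∧ (j:ℝ)/2^k ∈ U := by
    intro j
    by_cases hj : j ≤ 2^k
    · have hmem : (j:ℝ)/2^k ∈ Set.Icc (0:ℝ) 1 :=
        ⟨by positivity, by rw [div_le_one hP]; exact cast_le_pow hj⟩
      rw [← hUnion] at hmem
      obtain ⟨U, hU, hxU⟩ := hmem
      exact ⟨U, fun _ => ⟨hU, hxU⟩⟩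
    · exact ⟨∅, fun h => absurd h hj⟩
  choose Uof hUof using hex
  -- adjacent lattice points have opposite classifier values
  have hadj : ∀ i : ℕ, i < 2^k → ¬ (clf (triangleF^[k]) ((i:ℝ)/2^k) ↔
      clf (triangleF^[k]) (((i+1:ℕ):ℝ)/2^k)) := by
    intro i hi h
    rw [clf_pt k i hk (le_of_lt hi), clf_pt k (i+1) hk hi] at h
    rw [Nat.odd_iff, Nat.odd_iff] at h
    omega
  have hmono : ∀ i m : ℕ, i ≤ m → (i:ℝ)/2^k ≤ (m:ℝ)/2^k := by
    intro i m h
    first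
      | (gcongr; exact_mod_cast h)
      | gcongr
  -- no piece contains two distinct lattice points
  have key : ∀ V ∈ I, ∀ i m : ℕ, i ≤ 2^k → m ≤ 2^k → i < m →
      (i:ℝ)/2^k ∈ V → (m:ℝ)/2^k ∈ V → False := by
    intro V hV i m hi hm him hxi hxm
    have hcc := (hOrd V hV).1
    have hmid : ((i+1:ℕ):ℝ)/2^k ∈ Set.Icc ((i:ℝ)/2^k) ((m:ℝ)/2^k) :=
      ⟨hmono i (i+1) (by omega), hmono (i+1) m (by omega)⟩
    have hmem := hcc.out hxi hxm hmid
    exact hadj i (by omega) (hConst V hV _ hxi _ hmem)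
  -- the chosen pieces are pairwise distinct
  have hinj : Set.InjOn (fun j => Uof j) (Finset.range (2^k+1)) := by
    intro i hi m hm h
    rw [Finset.mem_coe, Finset.mem_range, Nat.lt_succ_iff] at hi hm
    by_contra hne
    rcases Nat.lt_or_ge i m with hlt | hge
    · have h' : Uof i = Uof m := h
      exact key (Uof i) ((hUof i hi).1) i m hi hm hlt ((hUof i hi).2)
        (h' ▸ (hUof m hm).2)
    · have h' : Uof i = Uof m := h
      have hlt : m < i := by omega
      exact key (Uof i) ((hUof i hi).1) m i hm hi hlt (h' ▸ (hUof m hm).2)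
        ((hUof i hi).2)
  have hlb : 2^k + 1 ≤ I.card := by
    have := Finset.card_le_card_of_injOn (fun j => Uof j)
      (fun j hj => (hUof j (Nat.lt_succ_iff.mp (Finset.mem_range.mp hj))).1) hinj
    simpa using this
  have hcard : I.card = 2^k + 1 := le_antisymm hub hlb
  refine ⟨hcard, ?_⟩
  -- every piece of I is one of the chosen ones
  have himage : (Finset.range (2^k+1)).image (fun j => Uof j) = I := by
    apply Finset.eq_of_subset_of_card_le
    · intro U hU
      obtain ⟨j, hj, rfl⟩ := Finset.mem_image.mp hU
      exact (hUof j (Nat.lt_succ_iff.mp (Finset.mem_range.mp hj))).1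
    · rw [hcard, Finset.card_image_of_injOn hinj, Finset.card_range]
  intro U hU
  obtain ⟨j, hjr, rfl⟩ : ∃ j ∈ Finset.range (2^k+1), Uof j = U :=
    Finset.mem_image.mp (himage ▸ hU)
  rw [Finset.mem_range, Nat.lt_succ_iff] at hjr
  obtain ⟨hUj, hxj⟩ := hUof j hjr
  -- the open core around the j-th lattice point is contained in Uof j
  have hcore : ∀ y, (j:ℝ)/2^k - 1/(2*2^k) < y → y < (j:ℝ)/2^k + 1/(2*2^k) →
      0 ≤ y → y ≤ 1 → y ∈ Uof j := by
    intro y hy1 hy2 hy0 hy1'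
    have hyIcc : y ∈ Set.Icc (0:ℝ) 1 := ⟨hy0, hy1'⟩
    rw [← hUnion] at hyIcc
    obtain ⟨V, hV, hyV⟩ := hyIcc
    rw [Finset.mem_coe] at hV
    obtain ⟨i, hir, hiV⟩ : ∃ i ∈ Finset.range (2^k+1), Uof i = V :=
      Finset.mem_image.mp (himage ▸ hV)
    rw [Finset.mem_range, Nat.lt_succ_iff] at hir
    subst hiV
    obtain ⟨hUi, hxi⟩ := hUof i hir
    rcases Nat.lt_trichotomy i j with hlt | heq | hgt
    · -- i < j
      by_cases hadj1 : i + 1 = j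
      · -- adjacent : classifier value of y distinguishes
        exfalso
        have hclf1 : clf (triangleF^[k]) y ↔ clf (triangleF^[k]) ((i:ℝ)/2^k) :=
          hConst _ hUi _ hyV _ hxi
        have hd : |2^k * y - (j:ℝ)| < 1/2 := by
          apply scaled_bound_lt
          rw [abs_lt]
          constructor <;> linarith
        have hclf2 : clf (triangleF^[k]) y ↔ Odd j := by
          rcases Nat.even_or_odd j with he | ho
          · have := clf_even k j hk hjr he hy0 hy1' hd
            constructor
            · intro hh; exact absurd hh this
            · intro hh; exact absurd hh (Nat.not_odd_iff_even.mpr he)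
          · exact ⟨fun _ => ho, fun _ => clf_odd k j hk hjr
              (Nat.not_even_iff_odd.mpr ho) hy0 hy1' (le_of_lt hd)⟩
        rw [clf_pt k i hk hir] at hclf1
        have : Odd i ↔ Odd j := hclf1.symm.trans hclf2
        rw [Nat.odd_iff, Nat.odd_iff] at this
        omega
      · -- i + 1 < j : lattice point i+1 lies between
        exfalso
        have hi1 : i + 1 < j := by omega
        have hcc := (hOrd _ hUi).1
        have hle : ((i+1:ℕ):ℝ)/2^k ≤ y := by
          have h1 : ((i+1:ℕ):ℝ)/2^k ≤ ((j-1:ℕ):ℝ)/2^k := hmono _ _ (by omega)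
          have hc : ((j-1:ℕ):ℝ) = (j:ℝ) - 1 := by
            have : 1 ≤ j := by omega
            push_cast [this]; ring
          have h2 : ((j-1:ℕ):ℝ)/2^k = (j:ℝ)/2^k - 1/2^k := by
            rw [hc]; field_simp
          have h3 : (j:ℝ)/2^k - 1/2^k < (j:ℝ)/2^k - 1/(2*2^k) := by linarith
          linarith [h1, h2 ▸ h1]
        have hmem := hcc.out hxi hyV ⟨hmono i (i+1) (by omega), hle⟩
        exact hadj i (by omega) (hConst _ hUi _ hxi _ hmem)
    · subst heq; exact hyV
    · -- j < i
      exfalso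
      by_cases hadj1 : j + 1 = i
      · have hclf1 : clf (triangleF^[k]) y ↔ clf (triangleF^[k]) ((i:ℝ)/2^k) :=
          hConst _ hUi _ hyV _ hxi
        have hd : |2^k * y - (j:ℝ)| < 1/2 := by
          apply scaled_bound_lt
          rw [abs_lt]
          constructor <;> linarith
        have hclf2 : clf (triangleF^[k]) y ↔ Odd j := by
          rcases Nat.even_or_odd j with he | ho
          · have := clf_even k j hk hjr he hy0 hy1' hd
            constructor
            · intro hh; exact absurd hh this
            · intro hh; exact absurd hh (Nat.not_odd_iff_even.mpr he)
          · exact ⟨fun _ => ho, fun _ => clf_odd k j hk hjr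
              (Nat.not_even_iff_odd.mpr ho) hy0 hy1' (le_of_lt hd)⟩
        rw [clf_pt k i hk hir] at hclf1
        have : Odd i ↔ Odd j := hclf1.symm.trans hclf2
        rw [Nat.odd_iff, Nat.odd_iff] at this
        omega
      · have hj1 : j + 1 < i := by omega
        have hcc := (hOrd _ hUi).1
        have hle : y ≤ ((i-1:ℕ):ℝ)/2^k := by
          have h1 : ((j+1:ℕ):ℝ)/2^k ≤ ((i-1:ℕ):ℝ)/2^k := hmono _ _ (by omega)
          have hc : ((j+1:ℕ):ℝ)/2^k = (j:ℝ)/2^k + 1/2^k := by push_cast; field_simp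
          linarith [hc ▸ h1]
        have hge : ((i-1:ℕ):ℝ)/2^k ≤ (i:ℝ)/2^k := hmono _ _ (by omega)
        have hmem := hcc.out hyV hxi ⟨hle, hge⟩
        have hc2 : ((i-1:ℕ)+1:ℕ) = i := by omega
        have := hadj (i-1) (by omega)
        rw [hc2] at this
        exact this (hConst _ hUi _ hmem _ hxi)
  -- integrability
  have hcont : Continuous (fun x => |triangleF^[k] x - 1/2|) :=
    ((cont_tri.iterate k).sub continuous_const).abs
  have hUsub : Uof j ⊆ Set.Icc (0:ℝ) 1 := by
    rw [← hUnion]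
    exact Set.subset_sUnion_of_mem (Finset.mem_coe.mpr hUj)
  have hInt : MeasureTheory.IntegrableOn (fun x => |triangleF^[k] x - 1/2|) (Uof j) :=
    (hcont.integrableOn_Icc).mono_set hUsub
  have hnn : 0 ≤ᵐ[MeasureTheory.volume.restrict (Uof j)] fun x => |triangleF^[k] x - 1/2| :=
    Filter.Eventually.of_forall (fun x => abs_nonneg _)
  rw [ge_iff_le, zpow_fact3 k]
  rcases lt_or_eq_of_le hjr with hjlt | hjeq
  · -- interior or left piece: use right half
    have hsub : Set.Ioo ((j:ℝ)/2^k) ((j:ℝ)/2^k + 1/(2*2^k)) ⊆ Uof j := by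
      intro y hy
      obtain ⟨hy1, hy2⟩ := hy
      have hj' : (j:ℝ) + 1 ≤ 2^k := by
        have := (Nat.cast_le (α := ℝ)).mpr hjlt
        push_cast at this; linarith
      have hy1' : y ≤ 1 := by
        have : (j:ℝ)/2^k + 1/(2*2^k) ≤ 1 := by
          rw [← sub_nonneg]
          have hexp : 1 - ((j:ℝ)/2^k + 1/(2*2^k)) = (2*(2^k - j) - 1)/(2*2^k) := by
            field_simp; ring
          rw [hexp]
          apply div_nonneg _ (by positivity)
          nlinarith
        linarith
      exact hcore y (by linarith) hy2 (le_trans (by positivity) (le_of_lt hy1)) hy1'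
    calc 1/(8*2^k)
        = ∫ x in Set.Ioo ((j:ℝ)/2^k) ((j:ℝ)/2^k + 1/(2*2^k)), |triangleF^[k] x - 1/2| :=
          (integral_half_lo k j hk hjlt).symm
      _ ≤ ∫ x in Uof j, |triangleF^[k] x - 1/2| :=
          MeasureTheory.setIntegral_mono_set hInt hnn (HasSubset.Subset.eventuallyLE hsub)
  · -- j = 2^k : use left half of the last piece
    have hc1 : ((j:ℝ))/2^k = 1 := by
      subst hjeq
      push_cast
      field_simp
    have hsub : Set.Ioo (1 - 1/(2*2^k)) 1 ⊆ Uof j := by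
      intro y hy
      obtain ⟨hy1, hy2⟩ := hy
      have hH1 : 1/(2*2^k) ≤ (1:ℝ) := by
        rw [div_le_one (by positivity)]
        linarith [one_le_pow₀ (by norm_num : (1:ℝ) ≤ 2) (n := k)]
      exact hcore y (by rw [hc1]; linarith) (by rw [hc1]; linarith) (by linarith)
        (le_of_lt hy2)
    calc 1/(8*2^k)
        = ∫ x in Set.Ioo (1 - 1/(2*2^k)) 1, |triangleF^[k] x - 1/2| :=
          (integral_half_hi k hk).symm
      _ ≤ ∫ x in Uof j, |triangleF^[k] x - 1/2| :=
          MeasureTheory.setIntegral_mono_set hInt hnn (HasSubset.Subset.eventuallyLE hsub)
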